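/- Let R = k[x_1,...,x_n,y] be a polynomial ring and I an ideal with Gröbner basis {y^{d_i} q_i + r_i} (i = 1,...,m) with respect to a term order such that the initial term of any polynomial is a term of its initial y-form, where y^{d_i} q_i is the initial y-form of y^{d_i} q_i + r_i and y does not divide q_i. Set C = ⟨q_1,...,q_m⟩ and I' = ⟨y^{d_i} q_i : i = 1,...,m⟩. Then C equals the saturation (I' : y^∞) = { f ∈ R : y^j f ∈ I' for some j ≥ 0 }. -/

import Mathlib

open MvPolynomial

noncomputable section

/-- The variable `y` (the last variable) in `R = k[x_1,…,x_n,y]`. -/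
def yv (k : Type*) [Field k] (n : ℕ) : MvPolynomial (Fin (n + 1)) k :=
  X (Fin.last n)

/-- The degree in `y` (the last variable). -/
def ydeg {k : Type*} [Field k] {n : ℕ} (p : MvPolynomial (Fin (n + 1)) k) : ℕ :=
  p.support.sup (fun m => m (Fin.last n))

/-- The initial `y`-form of `p`: the sum of all terms of `p` having the highest
power of `y`. -/
def iny {k : Type*} [Field k] {n : ℕ} (p : MvPolynomial (Fin (n + 1)) k) :
    MvPolynomial (Fin (n + 1)) k :=
  ∑ m ∈ p.support.filter (fun m => m (Fin.last n) = ydeg p), monomial m (p.coeff m)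

/-- A term order on the monomials of a polynomial ring: a linear order on exponent
vectors compatible with addition and with `0` smallest. -/
structure TermOrder (σ : Type*) where
  lo : LinearOrder (σ →₀ ℕ)
  add_le : ∀ a b c : σ →₀ ℕ, lo.le a b → lo.le (a + c) (b + c)
  zero_le : ∀ a : σ →₀ ℕ, lo.le 0 a

/-- The leading monomial of `p` (as an element of `WithBot`; `⊥` for `p = 0`). -/
def lm {k : Type*} [Field k] {σ : Type*} (ord : TermOrder σ)
    (p : MvPolynomial σ k) : WithBot (σ →₀ ℕ) :=
  letI := ord.lo
  p.support.max

/-- The leading term of `p` under the term order `ord`. -/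
def leadTerm {k : Type*} [Field k] {σ : Type*} (ord : TermOrder σ)
    (p : MvPolynomial σ k) : MvPolynomial σ k :=
  letI := ord.lo
  if h : p.support.Nonempty then
    monomial (p.support.max' h) (p.coeff (p.support.max' h))
  else 0

/-- The initial ideal of `J` under `ord`: generated by the leading terms of the
nonzero elements of `J`. -/
def initIdeal {k : Type*} [Field k] {σ : Type*} (ord : TermOrder σ)
    (J : Ideal (MvPolynomial σ k)) : Ideal (MvPolynomial σ k) :=
  Ideal.span { t | ∃ f ∈ J, f ≠ 0 ∧ t = leadTerm ord f }

/-- `g` is a Gröbner basis of `I` with respect to `ord`: the `g i` lie in `I`,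
generate it, and the leading monomial of every nonzero element of `I` is divisible
by the leading monomial of some `g i`. -/
def IsGB {k : Type*} [Field k] {σ : Type*} {ι : Type*} (ord : TermOrder σ)
    (I : Ideal (MvPolynomial σ k)) (g : ι → MvPolynomial σ k) : Prop :=
  (∀ i, g i ∈ I) ∧ I = Ideal.span (Set.range g) ∧
    ∀ f ∈ I, f ≠ 0 → ∃ (i : ι) (a b : σ →₀ ℕ),
      lm ord (g i) = (a : WithBot (σ →₀ ℕ)) ∧
      lm ord f = ((a + b : σ →₀ ℕ) : WithBot (σ →₀ ℕ))


/-- Key lemma in the single-variable polynomial world: for constants `Q i` of `A`,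
`f ∈ ⟨Polynomial.C (Q i)⟩` iff some `Polynomial.X^j * f ∈ ⟨Polynomial.X^(d i) * Polynomial.C (Q i)⟩`. -/
lemma poly_key {A : Type*} [CommRing A] {m : ℕ} (d : Fin m → ℕ) (Q : Fin m → A) (f : Polynomial A) :
    f ∈ Ideal.span (Set.range fun i => (Polynomial.C (Q i) : Polynomial A)) ↔
      ∃ j : ℕ, (Polynomial.X : Polynomial A) ^ j * f ∈
        Ideal.span (Set.range fun i => (Polynomial.X : Polynomial A) ^ d i * Polynomial.C (Q i)) := by
  constructor
  · intro h
    obtain ⟨c, hc⟩ := Submodule.mem_span_range_iff_exists_fun _ |>.mp h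
    refine ⟨Finset.univ.sup d, ?_⟩
    have hrw : (Polynomial.X : Polynomial A) ^ (Finset.univ.sup d) * f
        = ∑ i, (c i * Polynomial.X ^ (Finset.univ.sup d - d i)) * (Polynomial.X ^ d i * Polynomial.C (Q i)) := by
      rw [← hc, Finset.mul_sum]
      refine Finset.sum_congr rfl fun i _ => ?_
      have hle : d i ≤ Finset.univ.sup d := Finset.le_sup (Finset.mem_univ i)
      rw [smul_eq_mul, ← pow_sub_mul_pow (Polynomial.X : Polynomial A) hle]
      ring
    rw [hrw]
    exact Ideal.sum_mem _ fun i _ =>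
      Ideal.mul_mem_left _ _ (Ideal.subset_span ⟨i, rfl⟩)
  · rintro ⟨j, h⟩
    obtain ⟨c, hc⟩ := Submodule.mem_span_range_iff_exists_fun _ |>.mp h
    have hcoeff : ∀ t, f.coeff t ∈ Ideal.span (Set.range Q) := by
      intro t
      have h1 : f.coeff t = ((Polynomial.X : Polynomial A) ^ j * f).coeff (t + j) := by
        rw [Polynomial.coeff_X_pow_mul]
      rw [h1, ← hc, Polynomial.finset_sum_coeff]
      refine Ideal.sum_mem _ fun i _ => ?_
      have h2 : c i • ((Polynomial.X : Polynomial A) ^ d i * Polynomial.C (Q i)) = (c i * Polynomial.C (Q i)) * Polynomial.X ^ d i := by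
        rw [smul_eq_mul]; ring
      rw [h2, Polynomial.coeff_mul_X_pow']
      split_ifs with hd
      · rw [Polynomial.coeff_mul_C]
        exact Ideal.mul_mem_left _ _ (Ideal.subset_span ⟨i, rfl⟩)
      · exact zero_mem _
    have hC : ∀ a ∈ Ideal.span (Set.range Q),
        (Polynomial.C a : Polynomial A) ∈ Ideal.span (Set.range fun i => (Polynomial.C (Q i) : Polynomial A)) := by
      intro a ha
      have h3 := Ideal.mem_map_of_mem (Polynomial.C : A →+* Polynomial A) ha
      rwa [Ideal.map_span, ← Set.range_comp] at h3
    rw [f.as_sum_support]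
    refine Ideal.sum_mem _ fun t _ => ?_
    rw [← Polynomial.C_mul_X_pow_eq_monomial]
    exact Ideal.mul_mem_right _ _ (hC _ (hcoeff t))

/-- The coefficient of `iny p` vanishes off the top `y`-degree. -/
lemma coeff_iny_eq_zero {k : Type*} [Field k] {n : ℕ} (p : MvPolynomial (Fin (n + 1)) k)
    (u : Fin (n + 1) →₀ ℕ) (hu : u (Fin.last n) ≠ ydeg p) : coeff u (iny p) = 0 := by
  classical
  unfold iny
  rw [coeff_sum]
  refine Finset.sum_eq_zero fun v hv => ?_
  rw [Finset.mem_filter] at hv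
  rw [coeff_monomial]
  exact if_neg (fun h : v = u => hu (h ▸ hv.2))

/-- If `y^dd * q` is the initial `y`-form of `y^dd * q + r` and `y ∤ q`, then `q` is
`y`-free. -/
lemma q_free {k : Type*} [Field k] {n : ℕ} (dd : ℕ)
    (q r : MvPolynomial (Fin (n + 1)) k)
    (hiny : iny (yv k n ^ dd * q + r) = yv k n ^ dd * q)
    (hq : ¬ yv k n ∣ q) :
    ∀ u ∈ q.support, u (Fin.last n) = 0 := by
  classical
  set g := yv k n ^ dd * q + r with hg
  have hB : ∀ u ∈ q.support, u (Fin.last n) + dd = ydeg g := by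
    intro u hu
    have h1 : coeff (Finsupp.single (Fin.last n) dd + u) (yv k n ^ dd * q) = coeff u q := by
      rw [yv, X_pow_eq_monomial, coeff_monomial_mul, one_mul]
    have h2 : coeff (Finsupp.single (Fin.last n) dd + u) (iny g) ≠ 0 := by
      rw [hiny, h1]
      exact mem_support_iff.mp hu
    by_contra hne
    apply h2
    apply coeff_iny_eq_zero
    simp only [Finsupp.add_apply, Finsupp.single_apply, if_pos rfl, if_true]
    intro h
    exact hne (by omega)
  by_contra hcon
  push_neg at hcon
  obtain ⟨u0, hu0, hu0ne⟩ := hcon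
  apply hq
  have hpos : ∀ u ∈ q.support, 1 ≤ u (Fin.last n) := by
    intro u hu
    have := (hB u hu).trans (hB u0 hu0).symm
    omega
  have hqs : q = ∑ u ∈ q.support, monomial u (coeff u q) := (support_sum_monomial_coeff q).symm
  rw [hqs]
  refine Finset.dvd_sum fun u hu => ?_
  refine ⟨monomial (u - Finsupp.single (Fin.last n) 1) (coeff u q), ?_⟩
  have hle : Finsupp.single (Fin.last n) 1 ≤ u := Finsupp.single_le_iff.mpr (hpos u hu)
  rw [yv, show (X (Fin.last n) : MvPolynomial (Fin (n+1)) k)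
      = monomial (Finsupp.single (Fin.last n) 1) 1 from rfl, monomial_mul, one_mul,
    add_tsub_cancel_of_le hle]

/-- Let `{y^{d i} * q i + r i}` be a Gröbner basis of `I ⊆ k[x_1,…,x_n,y]` for a
term order whose leading term of any polynomial is a term of its initial `y`-form,
where `y^{d i} * q i` is the initial `y`-form of `y^{d i} * q i + r i` and
`y ∤ q i`.  Then `C = ⟨q_1,…,q_m⟩` equals the saturation
`(I' : y^∞) = {f : y^j f ∈ I' for some j}` where `I' = ⟨y^{d i} * q i⟩`. -/
theorem stmt_0 {k : Type*} [Field k] {n m : ℕ}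
    (ord : TermOrder (Fin (n + 1)))
    (hord : ∀ p : MvPolynomial (Fin (n + 1)) k, lm ord p = lm ord (iny p))
    (I : Ideal (MvPolynomial (Fin (n + 1)) k))
    (d : Fin m → ℕ) (q r : Fin m → MvPolynomial (Fin (n + 1)) k)
    (hGB : IsGB ord I (fun i => yv k n ^ d i * q i + r i))
    (hiny : ∀ i, iny (yv k n ^ d i * q i + r i) = yv k n ^ d i * q i)
    (hq : ∀ i, ¬ yv k n ∣ q i) :
    ∀ f : MvPolynomial (Fin (n + 1)) k,
      f ∈ Ideal.span (Set.range q) ↔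
        ∃ j : ℕ, yv k n ^ j * f ∈ Ideal.span (Set.range fun i => yv k n ^ d i * q i) := by
  intro f
  classical
  let σs : Fin (n+1) ≃ Fin (n+1) := Equiv.swap 0 (Fin.last n)
  let e : MvPolynomial (Fin (n+1)) k ≃ₐ[k] Polynomial (MvPolynomial (Fin n) k) :=
    (renameEquiv k σs).trans (finSuccEquiv k n)
  have hey : e (yv k n) = Polynomial.X := by
    rw [yv]
    simp only [e, AlgEquiv.trans_apply, renameEquiv_apply, rename_X]
    rw [show σs (Fin.last n) = 0 from Equiv.swap_apply_right 0 (Fin.last n)]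
    exact finSuccEquiv_X_zero
  have hdeg : ∀ p : MvPolynomial (Fin (n+1)) k, (e p).natDegree = degreeOf (Fin.last n) p := by
    intro p
    have h1 : (finSuccEquiv k n (rename σs p)).natDegree = degreeOf 0 (rename σs p) :=
      natDegree_finSuccEquiv _
    have h2 : degreeOf (σs (Fin.last n)) (rename σs p) = degreeOf (Fin.last n) p :=
      degreeOf_rename_of_injective (Equiv.injective σs) _
    rw [show σs (Fin.last n) = 0 from Equiv.swap_apply_right 0 (Fin.last n)] at h2
    simpa [e, AlgEquiv.trans_apply] using h1.trans h2
  have hmem : ∀ (s : Set (MvPolynomial (Fin (n+1)) k)) (p),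
      p ∈ Ideal.span s ↔ e p ∈ Ideal.span (⇑e '' s) := by
    intro s p
    constructor
    · intro hp
      rw [← Ideal.map_span e s]
      exact Ideal.mem_map_of_mem _ hp
    · intro hp
      have h3 := Ideal.mem_map_of_mem e.symm hp
      rw [Ideal.map_span, ← Set.image_comp] at h3
      simpa using h3
  have hfree : ∀ i, ∀ u ∈ (q i).support, u (Fin.last n) = 0 :=
    fun i => q_free (d i) (q i) (r i) (hiny i) (hq i)
  set Q : Fin m → MvPolynomial (Fin n) k := fun i => (e (q i)).coeff 0 with hQ
  have heq : ∀ i, e (q i) = Polynomial.C (Q i) := by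
    intro i
    have hnd : (e (q i)).natDegree = 0 := by
      rw [hdeg, degreeOf_eq_sup]
      exact Nat.le_zero.mp (Finset.sup_le fun u hu => le_of_eq (hfree i u hu))
    exact Polynomial.eq_C_of_natDegree_eq_zero hnd
  have himg1 : ⇑e '' Set.range q
      = Set.range fun i => (Polynomial.C (Q i) : Polynomial (MvPolynomial (Fin n) k)) := by
    rw [← Set.range_comp]
    ext x; simp only [Set.mem_range, Function.comp_apply, heq]
  have himg2 : ⇑e '' Set.range (fun i => yv k n ^ d i * q i)
      = Set.range fun i =>
          (Polynomial.X : Polynomial (MvPolynomial (Fin n) k)) ^ d i * Polynomial.C (Q i) := by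
    rw [← Set.range_comp]
    refine congrArg _ (funext fun i => ?_)
    simp only [Function.comp_apply, map_mul, map_pow, hey, heq i]
  rw [hmem _ f, himg1]
  have hR : ∀ j : ℕ,
      (yv k n ^ j * f ∈ Ideal.span (Set.range fun i => yv k n ^ d i * q i)) ↔
        ((Polynomial.X : Polynomial (MvPolynomial (Fin n) k)) ^ j * e f ∈
          Ideal.span (Set.range fun i =>
            (Polynomial.X : Polynomial (MvPolynomial (Fin n) k)) ^ d i * Polynomial.C (Q i))) := by
    intro j
    rw [hmem _ _, himg2, map_mul, map_pow, hey]
  simp only [hR]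
  exact poly_key d Q (e f)
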